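/- (Line-circle continuity) Let O, A, P be points of the Euclidean plane and r a real number. If dist O A < r (A is inside the circle of center O and radius r) and P ≠ A, then there exist two distinct points X and Y, both collinear with A and P, with dist O X = r and dist O Y = r, and such that A lies strictly between X and P. -/

import Mathlib

set_option maxHeartbeats 1000000

open Real AffineMap

private lemma quad_root_aux (a b c s : ℝ) (ha : a ≠ 0) (hs : s ^ 2 = b ^ 2 - 4 * a * c) :
    a * ((-b + s) / (2 * a)) ^ 2 + b * ((-b + s) / (2 * a)) + c = 0 := by
  field_simp
  nlinarith [hs]

private lemma quad_root_aux' (a b c s : ℝ) (ha : a ≠ 0) (hs : s ^ 2 = b ^ 2 - 4 * a * c) :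
    a * ((-b - s) / (2 * a)) ^ 2 + b * ((-b - s) / (2 * a)) + c = 0 := by
  field_simp
  nlinarith [hs]

theorem line_circle_continuity (O A P : EuclideanSpace ℝ (Fin 2)) (r : ℝ)
    (hA : dist O A < r) (hPA : P ≠ A) :
    ∃ X Y : EuclideanSpace ℝ (Fin 2), X ≠ Y ∧
      Collinear ℝ ({A, P, X} : Set (EuclideanSpace ℝ (Fin 2))) ∧
      Collinear ℝ ({A, P, Y} : Set (EuclideanSpace ℝ (Fin 2))) ∧
      dist O X = r ∧ dist O Y = r ∧ Sbtw ℝ X A P := by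
  have hr : 0 < r := lt_of_le_of_lt dist_nonneg hA
  set v : EuclideanSpace ℝ (Fin 2) := P - A with hv_def
  have hv : v ≠ 0 := sub_ne_zero_of_ne hPA
  set d : EuclideanSpace ℝ (Fin 2) := A - O with hd_def
  set a : ℝ := ‖v‖ ^ 2 with ha_def
  set b : ℝ := 2 * inner ℝ d v with hb_def
  set c : ℝ := ‖d‖ ^ 2 - r ^ 2 with hc_def
  have ha : 0 < a := pow_pos (norm_pos_iff.mpr hv) 2
  have hdn : ‖d‖ < r := by
    rw [hd_def, ← dist_eq_norm, dist_comm]; exact hA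
  have hc : c < 0 := by
    have := norm_nonneg d
    nlinarith
  set D : ℝ := b ^ 2 - 4 * a * c with hD_def
  have hD : 0 < D := by nlinarith
  have hsD : Real.sqrt D ^ 2 = D := Real.sq_sqrt hD.le
  have hsDpos : 0 < Real.sqrt D := Real.sqrt_pos.mpr hD
  have habs : |b| < Real.sqrt D := by
    have h2 : |b| ^ 2 < Real.sqrt D ^ 2 := by
      rw [hsD, sq_abs]; nlinarith
    exact lt_of_pow_lt_pow_left₀ 2 hsDpos.le h2
  have hbD1 : -b - Real.sqrt D < 0 := by
    have := neg_abs_le b; linarith [abs_le.mp habs.le]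
  have hbD2 : 0 < -b + Real.sqrt D := by
    have := le_abs_self b; linarith
  set t₁ : ℝ := (-b - Real.sqrt D) / (2 * a) with ht1_def
  set t₂ : ℝ := (-b + Real.sqrt D) / (2 * a) with ht2_def
  have ht1neg : t₁ < 0 := div_neg_of_neg_of_pos hbD1 (by linarith)
  have ht2pos : 0 < t₂ := div_pos hbD2 (by linarith)
  set X : EuclideanSpace ℝ (Fin 2) := A + t₁ • v with hX_def
  set Y : EuclideanSpace ℝ (Fin 2) := A + t₂ • v with hY_def
  -- roots satisfy the quadratic
  have hroot : ∀ t : ℝ, a * t ^ 2 + b * t + c = 0 → dist O X = r →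
      True := fun _ _ _ => trivial
  have hnorm : ∀ t : ℝ, ‖d + t • v‖ ^ 2 = a * t ^ 2 + b * t + c + r ^ 2 := by
    intro t
    have := @norm_add_sq_real (EuclideanSpace ℝ (Fin 2)) _ _ d (t • v)
    rw [this, real_inner_smul_right, norm_smul]
    simp [ha_def, hb_def, hc_def, mul_pow]
    ring
  have hq1 : a * t₁ ^ 2 + b * t₁ + c = 0 :=
    quad_root_aux' a b c (Real.sqrt D) ha.ne' (by rw [hsD, hD_def])
  have hq2 : a * t₂ ^ 2 + b * t₂ + c = 0 :=
    quad_root_aux a b c (Real.sqrt D) ha.ne' (by rw [hsD, hD_def])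
  have hdist : ∀ t : ℝ, a * t ^ 2 + b * t + c = 0 → dist O (A + t • v) = r := by
    intro t ht
    have h1 : ‖(A + t • v) - O‖ ^ 2 = r ^ 2 := by
      have : (A + t • v) - O = d + t • v := by rw [hd_def]; abel
      rw [this, hnorm, ht]; ring
    rw [dist_comm, dist_eq_norm]
    rw [← Real.sqrt_sq (norm_nonneg _), h1, Real.sqrt_sq hr.le]
  have hcol : ∀ t : ℝ, Collinear ℝ ({A, P, A + t • v} : Set (EuclideanSpace ℝ (Fin 2))) := by
    intro t
    rw [collinear_iff_of_mem (Set.mem_insert A _)]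
    refine ⟨v, ?_⟩
    rintro p (rfl | rfl | rfl)
    · exact ⟨0, by simp⟩
    · exact ⟨1, by simp [hv_def]⟩
    · exact ⟨t, by simp [vadd_eq_add]; abel⟩
  refine ⟨X, Y, ?_, hcol t₁, hcol t₂, hdist t₁ hq1, hdist t₂ hq2, ?_⟩
  · intro h
    rw [hX_def, hY_def, add_right_inj] at h
    have : t₁ = t₂ := smul_left_injective ℝ hv h
    rw [ht1_def, ht2_def] at this
    have h2a : (2 * a) ≠ 0 := by positivity
    field_simp at this
    linarith
  · -- Sbtw ℝ X A P
    set s : ℝ := -t₁ / (1 - t₁) with hs_def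
    have h1t : 0 < 1 - t₁ := by linarith
    have hs0 : 0 < s := div_pos (by linarith) h1t
    have hs1 : s < 1 := by
      rw [hs_def, div_lt_one h1t]; linarith
    have hXP : X ≠ P := by
      intro h
      rw [hX_def] at h
      have h2 : t₁ • v = P - A := by rw [← h, add_sub_cancel_left]
      have hv1 : (t₁ - 1) • v = 0 := by
        rw [sub_smul, one_smul, h2, hv_def]
        exact sub_self _
      have : t₁ - 1 = 0 := (smul_eq_zero.mp hv1).resolve_right hv
      linarith
    have hA_eq : A = lineMap X P s := by
      rw [lineMap_apply, hX_def]
      have hPX : P -ᵥ (A + t₁ • v) = (1 - t₁) • v := by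
        rw [vsub_eq_sub, sub_smul, one_smul, hv_def]
        abel
      rw [hPX, vadd_eq_add, smul_smul]
      have hst : s * (1 - t₁) = -t₁ := by
        rw [hs_def]; field_simp
      rw [hst, neg_smul]
      abel
    rw [hA_eq]
    exact sbtw_lineMap_iff.mpr ⟨hXP, hs0, hs1⟩
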